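/- Let V ⊆ ℝ² be open, B ≠ 0 a real constant, and φ : V → ℝ a four times continuously differentiable function with φ(x,y) ≠ 0 and Δφ(x,y) ≠ 0 for all (x,y) ∈ V. Set λ ≔ Δφ and R ≔ −(1/2)·(Δλ/λ − (λ_x² + λ_y²)/λ²), and define σ : V × ℝ → ℝ by σ(x,y,r) ≔ −r²/(4·B·φ(x,y)) − B·φ(x,y)/4. Then for each fixed (x,y) ∈ V the following are equivalent: (i) for every r ∈ ℝ one has σ²·R − (1/2)·σ_xx·σ + (1/2)·σ_x² − (1/2)·σ_yy·σ + (1/2)·σ_y² − (B/4)·λ·σ − B·λ·σ²·σ_rr − (B²/2)·σ·σ_rr·(φ_x² + φ_y²) + (B/2)·σ_y·φ_y + (B/2)·σ_x·φ_x + (B²/8)·(φ_x² + φ_y²) = 0 at (x,y,r); (ii) R − (φ_x² + φ_y²)/(2·φ²) + λ/φ = 0 at (x,y). -/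

import Mathlib

/-- Partial derivative in `x` of a function of two real variables. -/
noncomputable def pdx (f : ℝ × ℝ → ℝ) (p : ℝ × ℝ) : ℝ := fderiv ℝ f p (1, 0)

/-- Partial derivative in `y` of a function of two real variables. -/
noncomputable def pdy (f : ℝ × ℝ → ℝ) (p : ℝ × ℝ) : ℝ := fderiv ℝ f p (0, 1)

/-- Laplacian of a function of two real variables. -/
noncomputable def lap (f : ℝ × ℝ → ℝ) (p : ℝ × ℝ) : ℝ := pdx (pdx f) p + pdy (pdy f) p

/-- Partial derivative in `x` of a function of three real variables `(x, y, r)`. -/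
noncomputable def pX (f : ℝ × ℝ × ℝ → ℝ) (q : ℝ × ℝ × ℝ) : ℝ :=
  fderiv ℝ f q ((1, 0, 0) : ℝ × ℝ × ℝ)

/-- Partial derivative in `y` of a function of three real variables `(x, y, r)`. -/
noncomputable def pY (f : ℝ × ℝ × ℝ → ℝ) (q : ℝ × ℝ × ℝ) : ℝ :=
  fderiv ℝ f q ((0, 1, 0) : ℝ × ℝ × ℝ)

/-- Partial derivative in `r` of a function of three real variables `(x, y, r)`. -/
noncomputable def pR (f : ℝ × ℝ × ℝ → ℝ) (q : ℝ × ℝ × ℝ) : ℝ :=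
  fderiv ℝ f q ((0, 0, 1) : ℝ × ℝ × ℝ)

noncomputable def piCLM : (ℝ × ℝ × ℝ) →L[ℝ] (ℝ × ℝ) :=
  (ContinuousLinearMap.fst ℝ ℝ (ℝ × ℝ)).prod
    ((ContinuousLinearMap.fst ℝ ℝ ℝ).comp (ContinuousLinearMap.snd ℝ ℝ (ℝ × ℝ)))

noncomputable def rhoCLM : (ℝ × ℝ × ℝ) →L[ℝ] ℝ :=
  (ContinuousLinearMap.snd ℝ ℝ ℝ).comp (ContinuousLinearMap.snd ℝ ℝ (ℝ × ℝ))

lemma inv_comp_fderiv {E : Type*} [NormedAddCommGroup E] [NormedSpace ℝ E]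
    {g : E → ℝ} {g' : E →L[ℝ] ℝ} {q : E} (hg : HasFDerivAt g g' q) (h : g q ≠ 0) :
    HasFDerivAt (fun t => (g t)⁻¹) ((-(g q ^ 2)⁻¹) • g') q := by
  have h2 := (hasFDerivAt_inv h).comp q hg
  exact h2.congr_fderiv (by ext v; simp [mul_comm])

lemma sigma_d1 (B : ℝ) (hB : B ≠ 0) (φ : ℝ × ℝ → ℝ) (x y r : ℝ)
    (hd : DifferentiableAt ℝ φ (x, y)) (h0 : φ (x, y) ≠ 0) :
    pX (fun q : ℝ × ℝ × ℝ =>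
        -(q.2.2) ^ 2 / (4 * B * φ (q.1, q.2.1)) - B * φ (q.1, q.2.1) / 4) (x, y, r)
      = r ^ 2 * pdx φ (x, y) / (4 * B * (φ (x, y)) ^ 2) - B * pdx φ (x, y) / 4 ∧
    pY (fun q : ℝ × ℝ × ℝ =>
        -(q.2.2) ^ 2 / (4 * B * φ (q.1, q.2.1)) - B * φ (q.1, q.2.1) / 4) (x, y, r)
      = r ^ 2 * pdy φ (x, y) / (4 * B * (φ (x, y)) ^ 2) - B * pdy φ (x, y) / 4 ∧
    pR (fun q : ℝ × ℝ × ℝ =>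
        -(q.2.2) ^ 2 / (4 * B * φ (q.1, q.2.1)) - B * φ (q.1, q.2.1) / 4) (x, y, r)
      = -r / (2 * B * φ (x, y)) := by
  have hπ : HasFDerivAt (fun q : ℝ × ℝ × ℝ => (q.1, q.2.1)) piCLM (x, y, r) :=
    piCLM.hasFDerivAt
  have hφc : HasFDerivAt (fun q : ℝ × ℝ × ℝ => φ (q.1, q.2.1))
      ((fderiv ℝ φ (x, y)).comp piCLM) (x, y, r) :=
    HasFDerivAt.comp _ hd.hasFDerivAt hπ
  have hr2 : HasFDerivAt (fun q : ℝ × ℝ × ℝ => q.2.2) rhoCLM (x, y, r) :=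
    rhoCLM.hasFDerivAt
  have hne : 4 * B * φ (x, y) ≠ 0 := by simp [hB, h0]
  have hfun : (fun q : ℝ × ℝ × ℝ =>
        -(q.2.2) ^ 2 / (4 * B * φ (q.1, q.2.1)) - B * φ (q.1, q.2.1) / 4)
      = fun q : ℝ × ℝ × ℝ =>
        -(q.2.2 * q.2.2) * (4 * B * φ (q.1, q.2.1))⁻¹ - (B / 4) * φ (q.1, q.2.1) := by
    funext q; ring
  have hinv := inv_comp_fderiv (hφc.const_mul (4 * B)) hne
  have hneg : HasFDerivAt (fun q : ℝ × ℝ × ℝ => -(q.2.2 * q.2.2))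
      (-(r • rhoCLM + r • rhoCLM)) (x, y, r) := (hr2.mul hr2).neg
  have hσ := (hneg.mul hinv).sub (hφc.const_mul (B / 4))
  simp only [Pi.mul_def, Pi.sub_def] at hσ
  refine ⟨?_, ?_, ?_⟩
  · rw [pX, hfun, hσ.fderiv]
    simp [piCLM, rhoCLM, pdx]
    field_simp
  · rw [pY, hfun, hσ.fderiv]
    simp [piCLM, rhoCLM, pdy]
    field_simp
  · rw [pR, hfun, hσ.fderiv]
    simp [piCLM, rhoCLM, Prod.mk_zero_zero]
    field_simp
    ring

set_option maxHeartbeats 1000000 in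
lemma sigma_d2 (B : ℝ) (hB : B ≠ 0) (φ : ℝ × ℝ → ℝ) (V : Set (ℝ × ℝ)) (hV : IsOpen V)
    (hd : ∀ z ∈ V, DifferentiableAt ℝ φ z) (h0 : ∀ z ∈ V, φ z ≠ 0)
    (x y : ℝ) (hxy : (x, y) ∈ V) (r : ℝ)
    (hdx : DifferentiableAt ℝ (pdx φ) (x, y)) (hdy : DifferentiableAt ℝ (pdy φ) (x, y)) :
    pX (pX (fun q : ℝ × ℝ × ℝ =>
        -(q.2.2) ^ 2 / (4 * B * φ (q.1, q.2.1)) - B * φ (q.1, q.2.1) / 4)) (x, y, r)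
      = r ^ 2 * pdx (pdx φ) (x, y) / (4 * B * (φ (x, y)) ^ 2)
        - r ^ 2 * (pdx φ (x, y)) ^ 2 / (2 * B * (φ (x, y)) ^ 3)
        - B * pdx (pdx φ) (x, y) / 4 ∧
    pY (pY (fun q : ℝ × ℝ × ℝ =>
        -(q.2.2) ^ 2 / (4 * B * φ (q.1, q.2.1)) - B * φ (q.1, q.2.1) / 4)) (x, y, r)
      = r ^ 2 * pdy (pdy φ) (x, y) / (4 * B * (φ (x, y)) ^ 2)
        - r ^ 2 * (pdy φ (x, y)) ^ 2 / (2 * B * (φ (x, y)) ^ 3)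
        - B * pdy (pdy φ) (x, y) / 4 ∧
    pR (pR (fun q : ℝ × ℝ × ℝ =>
        -(q.2.2) ^ 2 / (4 * B * φ (q.1, q.2.1)) - B * φ (q.1, q.2.1) / 4)) (x, y, r)
      = -1 / (2 * B * φ (x, y)) := by
  have hπ : HasFDerivAt (fun q : ℝ × ℝ × ℝ => (q.1, q.2.1)) piCLM (x, y, r) :=
    piCLM.hasFDerivAt
  have hφc : HasFDerivAt (fun q : ℝ × ℝ × ℝ => φ (q.1, q.2.1))
      ((fderiv ℝ φ (x, y)).comp piCLM) (x, y, r) :=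
    HasFDerivAt.comp _ (hd _ hxy).hasFDerivAt hπ
  have hr2 : HasFDerivAt (fun q : ℝ × ℝ × ℝ => q.2.2) rhoCLM (x, y, r) :=
    rhoCLM.hasFDerivAt
  have hxyne := h0 _ hxy
  have hW : IsOpen {q : ℝ × ℝ × ℝ | (q.1, q.2.1) ∈ V} := by
    have : Continuous (fun q : ℝ × ℝ × ℝ => (q.1, q.2.1)) := by fun_prop
    exact hV.preimage this
  have hmem : ((x, y, r) : ℝ × ℝ × ℝ) ∈ {q : ℝ × ℝ × ℝ | (q.1, q.2.1) ∈ V} := hxy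
  refine ⟨?_, ?_, ?_⟩
  · have hev : pX (fun q : ℝ × ℝ × ℝ =>
          -(q.2.2) ^ 2 / (4 * B * φ (q.1, q.2.1)) - B * φ (q.1, q.2.1) / 4)
        =ᶠ[nhds ((x, y, r) : ℝ × ℝ × ℝ)] (fun q : ℝ × ℝ × ℝ =>
          q.2.2 ^ 2 * pdx φ (q.1, q.2.1) / (4 * B * (φ (q.1, q.2.1)) ^ 2)
            - B * pdx φ (q.1, q.2.1) / 4) := by
      filter_upwards [hW.mem_nhds hmem] with q hq
      obtain ⟨qx, qy, qr⟩ := q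
      exact (sigma_d1 B hB φ qx qy qr (hd _ hq) (h0 _ hq)).1
    rw [pX, hev.fderiv_eq]
    have hfun : (fun q : ℝ × ℝ × ℝ =>
          q.2.2 ^ 2 * pdx φ (q.1, q.2.1) / (4 * B * (φ (q.1, q.2.1)) ^ 2)
            - B * pdx φ (q.1, q.2.1) / 4)
        = fun q : ℝ × ℝ × ℝ =>
          (q.2.2 * q.2.2) * pdx φ (q.1, q.2.1)
              * (4 * B * (φ (q.1, q.2.1) * φ (q.1, q.2.1)))⁻¹
            - (B / 4) * pdx φ (q.1, q.2.1) := by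
      funext q; ring
    have hh : HasFDerivAt (fun q : ℝ × ℝ × ℝ => pdx φ (q.1, q.2.1))
        ((fderiv ℝ (pdx φ) (x, y)).comp piCLM) (x, y, r) :=
      HasFDerivAt.comp (g := pdx φ) ((x, y, r) : ℝ × ℝ × ℝ) hdx.hasFDerivAt hπ
    have hne : 4 * B * (φ (x, y) * φ (x, y)) ≠ 0 := by simp [hB, hxyne]
    have hinv := inv_comp_fderiv ((hφc.mul hφc).const_mul (4 * B)) hne
    have hg := (((hr2.mul hr2).mul hh).mul hinv).sub (hh.const_mul (B / 4))
    simp only [Pi.mul_def, Pi.sub_def] at hg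
    rw [hfun, hg.fderiv]
    simp [piCLM, rhoCLM, pdx]
    field_simp
    ring
  · have hev : pY (fun q : ℝ × ℝ × ℝ =>
          -(q.2.2) ^ 2 / (4 * B * φ (q.1, q.2.1)) - B * φ (q.1, q.2.1) / 4)
        =ᶠ[nhds ((x, y, r) : ℝ × ℝ × ℝ)] (fun q : ℝ × ℝ × ℝ =>
          q.2.2 ^ 2 * pdy φ (q.1, q.2.1) / (4 * B * (φ (q.1, q.2.1)) ^ 2)
            - B * pdy φ (q.1, q.2.1) / 4) := by
      filter_upwards [hW.mem_nhds hmem] with q hq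
      obtain ⟨qx, qy, qr⟩ := q
      exact (sigma_d1 B hB φ qx qy qr (hd _ hq) (h0 _ hq)).2.1
    rw [pY, hev.fderiv_eq]
    have hfun : (fun q : ℝ × ℝ × ℝ =>
          q.2.2 ^ 2 * pdy φ (q.1, q.2.1) / (4 * B * (φ (q.1, q.2.1)) ^ 2)
            - B * pdy φ (q.1, q.2.1) / 4)
        = fun q : ℝ × ℝ × ℝ =>
          (q.2.2 * q.2.2) * pdy φ (q.1, q.2.1)
              * (4 * B * (φ (q.1, q.2.1) * φ (q.1, q.2.1)))⁻¹
            - (B / 4) * pdy φ (q.1, q.2.1) := by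
      funext q; ring
    have hh : HasFDerivAt (fun q : ℝ × ℝ × ℝ => pdy φ (q.1, q.2.1))
        ((fderiv ℝ (pdy φ) (x, y)).comp piCLM) (x, y, r) :=
      HasFDerivAt.comp (g := pdy φ) ((x, y, r) : ℝ × ℝ × ℝ) hdy.hasFDerivAt hπ
    have hne : 4 * B * (φ (x, y) * φ (x, y)) ≠ 0 := by simp [hB, hxyne]
    have hinv := inv_comp_fderiv ((hφc.mul hφc).const_mul (4 * B)) hne
    have hg := (((hr2.mul hr2).mul hh).mul hinv).sub (hh.const_mul (B / 4))
    simp only [Pi.mul_def, Pi.sub_def] at hg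
    rw [hfun, hg.fderiv]
    simp [piCLM, rhoCLM, pdy]
    field_simp
    ring
  · have hev : pR (fun q : ℝ × ℝ × ℝ =>
          -(q.2.2) ^ 2 / (4 * B * φ (q.1, q.2.1)) - B * φ (q.1, q.2.1) / 4)
        =ᶠ[nhds ((x, y, r) : ℝ × ℝ × ℝ)] (fun q : ℝ × ℝ × ℝ =>
          -q.2.2 / (2 * B * φ (q.1, q.2.1))) := by
      filter_upwards [hW.mem_nhds hmem] with q hq
      obtain ⟨qx, qy, qr⟩ := q
      exact (sigma_d1 B hB φ qx qy qr (hd _ hq) (h0 _ hq)).2.2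
    rw [pR, hev.fderiv_eq]
    have hfun : (fun q : ℝ × ℝ × ℝ => -q.2.2 / (2 * B * φ (q.1, q.2.1)))
        = fun q : ℝ × ℝ × ℝ => -q.2.2 * (2 * B * φ (q.1, q.2.1))⁻¹ := by
      funext q; ring
    have hne : 2 * B * φ (x, y) ≠ 0 := by simp [hB, hxyne]
    have hinv := inv_comp_fderiv (hφc.const_mul (2 * B)) hne
    have hg := (hr2.neg.mul hinv)
    simp only [Pi.mul_def, Pi.sub_def, Pi.neg_def] at hg
    rw [hfun, hg.fderiv]
    simp [piCLM, rhoCLM, Prod.mk_zero_zero]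
    field_simp

set_option maxHeartbeats 1000000 in
/-- With `λ = Δφ`, `R = −(1/2)(Δλ/λ − (λ_x² + λ_y²)/λ²)` and
`σ(x,y,r) = −r²/(4Bφ) − Bφ/4`, the fourth-order polynomial equation in `r` obtained from
the Ricci conditions holds for all `r` iff `R − (φ_x² + φ_y²)/(2φ²) + Δφ/φ = 0`. -/
theorem poly_ricci_equation_iff
    (V : Set (ℝ × ℝ)) (hV : IsOpen V) (B : ℝ) (hB : B ≠ 0)
    (φ : ℝ × ℝ → ℝ) (hφ : ContDiffOn ℝ 4 φ V)
    (hφ0 : ∀ p ∈ V, φ p ≠ 0) (hlam0 : ∀ p ∈ V, lap φ p ≠ 0) :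
    ∀ p ∈ V,
      letI lam : ℝ × ℝ → ℝ := lap φ
      letI R : ℝ :=
        -(1 / 2) * (lap lam p / lam p - ((pdx lam p) ^ 2 + (pdy lam p) ^ 2) / (lam p) ^ 2)
      letI σ : ℝ × ℝ × ℝ → ℝ := fun q =>
        -(q.2.2) ^ 2 / (4 * B * φ (q.1, q.2.1)) - B * φ (q.1, q.2.1) / 4
      ((∀ r : ℝ,
          letI q : ℝ × ℝ × ℝ := (p.1, p.2, r)
          (σ q) ^ 2 * R - (1 / 2) * pX (pX σ) q * σ q + (1 / 2) * (pX σ q) ^ 2 -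
              (1 / 2) * pY (pY σ) q * σ q + (1 / 2) * (pY σ q) ^ 2 -
              (B / 4) * lam p * σ q - B * lam p * (σ q) ^ 2 * pR (pR σ) q -
              (B ^ 2 / 2) * σ q * pR (pR σ) q * ((pdx φ p) ^ 2 + (pdy φ p) ^ 2) +
              (B / 2) * pY σ q * pdy φ p + (B / 2) * pX σ q * pdx φ p +
              (B ^ 2 / 8) * ((pdx φ p) ^ 2 + (pdy φ p) ^ 2) = 0) ↔
        R - ((pdx φ p) ^ 2 + (pdy φ p) ^ 2) / (2 * (φ p) ^ 2) + lam p / φ p = 0) := by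
  intro p hp
  obtain ⟨x, y⟩ := p
  have hd : ∀ z ∈ V, DifferentiableAt ℝ φ z := fun z hz =>
    (hφ.contDiffAt (hV.mem_nhds hz)).differentiableAt (by norm_num)
  have hdx : DifferentiableAt ℝ (pdx φ) (x, y) := by
    have h4 : ContDiffAt ℝ 4 φ (x, y) := hφ.contDiffAt (hV.mem_nhds hp)
    have h3 : ContDiffAt ℝ 3 (fderiv ℝ φ) (x, y) := h4.fderiv_right (by norm_num)
    have h2 : ContDiffAt ℝ 3 (pdx φ) (x, y) := h3.clm_apply contDiffAt_const
    exact h2.differentiableAt (by norm_num)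
  have hdy : DifferentiableAt ℝ (pdy φ) (x, y) := by
    have h4 : ContDiffAt ℝ 4 φ (x, y) := hφ.contDiffAt (hV.mem_nhds hp)
    have h3 : ContDiffAt ℝ 3 (fderiv ℝ φ) (x, y) := h4.fderiv_right (by norm_num)
    have h2 : ContDiffAt ℝ 3 (pdy φ) (x, y) := h3.clm_apply contDiffAt_const
    exact h2.differentiableAt (by norm_num)
  have ha : φ (x, y) ≠ 0 := hφ0 _ hp
  have hl : lap φ (x, y) ≠ 0 := hlam0 _ hp
  have e1 : ∀ r : ℝ, pX (fun q : ℝ × ℝ × ℝ =>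
        -(q.2.2) ^ 2 / (4 * B * φ (q.1, q.2.1)) - B * φ (q.1, q.2.1) / 4) (x, y, r)
      = r ^ 2 * pdx φ (x, y) / (4 * B * (φ (x, y)) ^ 2) - B * pdx φ (x, y) / 4 :=
    fun r => (sigma_d1 B hB φ x y r (hd _ hp) ha).1
  have e2 : ∀ r : ℝ, pY (fun q : ℝ × ℝ × ℝ =>
        -(q.2.2) ^ 2 / (4 * B * φ (q.1, q.2.1)) - B * φ (q.1, q.2.1) / 4) (x, y, r)
      = r ^ 2 * pdy φ (x, y) / (4 * B * (φ (x, y)) ^ 2) - B * pdy φ (x, y) / 4 :=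
    fun r => (sigma_d1 B hB φ x y r (hd _ hp) ha).2.1
  have e3 : ∀ r : ℝ, pX (pX (fun q : ℝ × ℝ × ℝ =>
        -(q.2.2) ^ 2 / (4 * B * φ (q.1, q.2.1)) - B * φ (q.1, q.2.1) / 4)) (x, y, r)
      = r ^ 2 * pdx (pdx φ) (x, y) / (4 * B * (φ (x, y)) ^ 2)
        - r ^ 2 * (pdx φ (x, y)) ^ 2 / (2 * B * (φ (x, y)) ^ 3)
        - B * pdx (pdx φ) (x, y) / 4 :=
    fun r => (sigma_d2 B hB φ V hV hd hφ0 x y hp r hdx hdy).1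
  have e4 : ∀ r : ℝ, pY (pY (fun q : ℝ × ℝ × ℝ =>
        -(q.2.2) ^ 2 / (4 * B * φ (q.1, q.2.1)) - B * φ (q.1, q.2.1) / 4)) (x, y, r)
      = r ^ 2 * pdy (pdy φ) (x, y) / (4 * B * (φ (x, y)) ^ 2)
        - r ^ 2 * (pdy φ (x, y)) ^ 2 / (2 * B * (φ (x, y)) ^ 3)
        - B * pdy (pdy φ) (x, y) / 4 :=
    fun r => (sigma_d2 B hB φ V hV hd hφ0 x y hp r hdx hdy).2.1
  have e5 : ∀ r : ℝ, pR (pR (fun q : ℝ × ℝ × ℝ =>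
        -(q.2.2) ^ 2 / (4 * B * φ (q.1, q.2.1)) - B * φ (q.1, q.2.1) / 4)) (x, y, r)
      = -1 / (2 * B * φ (x, y)) :=
    fun r => (sigma_d2 B hB φ V hV hd hφ0 x y hp r hdx hdy).2.2
  dsimp only
  simp only [e1, e2, e3, e4, e5]
  rw [show lap φ (x, y) = pdx (pdx φ) (x, y) + pdy (pdy φ) (x, y) from rfl] at hl ⊢
  set px := pdx φ (x, y) with hpx
  set py := pdy φ (x, y) with hpy
  set pxx := pdx (pdx φ) (x, y) with hpxx
  set pyy := pdy (pdy φ) (x, y) with hpyy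
  set a := φ (x, y) with haa
  set R : ℝ := -(1 / 2) * (lap (lap φ) (x, y) / (pxx + pyy) -
      ((pdx (lap φ) (x, y)) ^ 2 + (pdy (lap φ) (x, y)) ^ 2) / (pxx + pyy) ^ 2) with hR
  have key : ∀ r : ℝ,
      (-r ^ 2 / (4 * B * a) - B * a / 4) ^ 2 * R -
        1 / 2 * (r ^ 2 * pxx / (4 * B * a ^ 2) - r ^ 2 * px ^ 2 / (2 * B * a ^ 3) - B * pxx / 4) *
          (-r ^ 2 / (4 * B * a) - B * a / 4) +
        1 / 2 * (r ^ 2 * px / (4 * B * a ^ 2) - B * px / 4) ^ 2 -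
        1 / 2 * (r ^ 2 * pyy / (4 * B * a ^ 2) - r ^ 2 * py ^ 2 / (2 * B * a ^ 3) - B * pyy / 4) *
          (-r ^ 2 / (4 * B * a) - B * a / 4) +
        1 / 2 * (r ^ 2 * py / (4 * B * a ^ 2) - B * py / 4) ^ 2 -
        B / 4 * (pxx + pyy) * (-r ^ 2 / (4 * B * a) - B * a / 4) -
        B * (pxx + pyy) * (-r ^ 2 / (4 * B * a) - B * a / 4) ^ 2 * (-1 / (2 * B * a)) -
        B ^ 2 / 2 * (-r ^ 2 / (4 * B * a) - B * a / 4) * (-1 / (2 * B * a)) * (px ^ 2 + py ^ 2) +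
        B / 2 * (r ^ 2 * py / (4 * B * a ^ 2) - B * py / 4) * py +
        B / 2 * (r ^ 2 * px / (4 * B * a ^ 2) - B * px / 4) * px +
        B ^ 2 / 8 * (px ^ 2 + py ^ 2)
      = (-r ^ 2 / (4 * B * a) - B * a / 4) ^ 2 *
          (R - (px ^ 2 + py ^ 2) / (2 * a ^ 2) + (pxx + pyy) / a) := by
    intro r
    field_simp
    ring
  constructor
  · intro h
    have h0 := h 0
    rw [key 0] at h0
    have hσ0 : (-(0:ℝ) ^ 2 / (4 * B * a) - B * a / 4) ≠ 0 := by
      have hv : (-(0:ℝ) ^ 2 / (4 * B * a) - B * a / 4) = -(B * a / 4) := by norm_num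
      rw [hv]
      simp only [ne_eq, neg_eq_zero, div_eq_zero_iff]
      push_neg
      exact ⟨mul_ne_zero hB ha, by norm_num⟩
    rcases mul_eq_zero.mp h0 with h1 | h2
    · exact (hσ0 (sq_eq_zero_iff.mp h1)).elim
    · exact h2
  · intro h r
    rw [key r, h, mul_zero]
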